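/- Every Tychonoff P-space is sequentially Ascoli, i.e., every sequence of continuous real-valued functions converging in the compact-open topology is equicontinuous. -/
import Mathlib


/-- Every Tychonoff P-space is sequentially Ascoli: every sequence of continuous real-valued
functions converging in the compact-open topology is equicontinuous. -/
theorem stmt_4 {X : Type*} [TopologicalSpace X] [T2Space X] [CompletelyRegularSpace X]
    (hP : ∀ s : ℕ → Set X, (∀ n, IsOpen (s n)) → IsOpen (⋂ n, s n))
    (f : ℕ → C(X, ℝ)) (g : C(X, ℝ)) (hf : Filter.Tendsto f Filter.atTop (nhds g)) :
    Equicontinuous (fun n => (f n : X → ℝ)) := by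
  intro x U hU
  obtain ⟨ε, hε, hεU⟩ := Metric.mem_uniformity_dist.mp hU
  set s : ℕ → Set X := fun n => {y | dist (f n x) (f n y) < ε} with hs_def
  have hs : ∀ n, IsOpen (s n) := fun n =>
    isOpen_lt (continuous_const.dist (f n).continuous) continuous_const
  have hopen : IsOpen (⋂ n, s n) := hP s hs
  have hx : x ∈ ⋂ n, s n := Set.mem_iInter.2 fun n => by simp [hs_def, hε]
  filter_upwards [hopen.mem_nhds hx] with y hy n
  exact hεU (Set.mem_iInter.mp hy n)
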